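/- If $0 < b \leq a < 1$, $h \in [0,1]$, and either $a > b$ or $h < 1$, then the unique critical point of $w(u,v) = 1 - (a u^2 + b v^2 + 2 b u v) - 2(1-u-v)(a u + h b v)$, given by $(u^\star, v^\star) = \frac{1}{a(a-b) + (1-h)^2 b^2}\,\bigl(b(1-h)(a-hb),\; a(a-b)\bigr)$, does not lie in the open triangle $\{(u,v) : u > 0, v > 0, u+v < 1\}$. -/

import Mathlib

open Set

theorem stmt_4 (a b h : ℝ) (hb : 0 < b) (hba : b ≤ a) (ha : a < 1)
    (hh : h ∈ Icc (0:ℝ) 1) (hcase : b < a ∨ h < 1) :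
    ¬ (0 < b*(1-h)*(a - h*b) / (a*(a-b) + (1-h)^2*b^2) ∧
       0 < a*(a-b) / (a*(a-b) + (1-h)^2*b^2) ∧
       b*(1-h)*(a - h*b) / (a*(a-b) + (1-h)^2*b^2)
         + a*(a-b) / (a*(a-b) + (1-h)^2*b^2) < 1) := by
  obtain ⟨hh0, hh1⟩ := hh
  rintro ⟨h1, h2, h3⟩
  have hD : 0 < a*(a-b) + (1-h)^2*b^2 := by
    rcases hcase with hc | hc
    · nlinarith [sq_nonneg ((1-h)*b)]
    · nlinarith [mul_pos (pow_pos (by linarith : (0:ℝ) < 1-h) 2) (pow_pos hb 2), mul_nonneg (by linarith : (0:ℝ) ≤ a) (by linarith : (0:ℝ) ≤ a-b)]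
  have h1' : 0 < b*(1-h)*(a - h*b) := by
    have := (lt_div_iff₀ hD).mp h1; linarith [this]
  have h2' : 0 < a*(a-b) := by
    have := (lt_div_iff₀ hD).mp h2; linarith [this]
  have h3' : b*(1-h)*(a - h*b) + a*(a-b) < a*(a-b) + (1-h)^2*b^2 := by
    rw [← add_div, div_lt_one hD] at h3; exact h3
  nlinarith [mul_nonneg (mul_nonneg hb.le (by linarith : (0:ℝ) ≤ 1-h)) (sub_nonneg.2 hba)]
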